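/- Let R → S be a G-Galois extension of commutative rings with G finite, and let T be a commutative R-algebra. Then T → T ⊗_R S is a G-Galois extension: (T ⊗_R S)^G = T and the map T ⊗_R S ⊗_T (T ⊗_R S) → ∏_{g∈G} (T ⊗_R S) induced by (x, y) ↦ (x·g(y))_g is an isomorphism. -/

import Mathlib

open scoped TensorProduct

/-- The canonical map `h : S ⊗[R] S → ∏_{g ∈ G} S`, `x ⊗ y ↦ (x · g(y))_g`. -/
noncomputable def galoisMap (R S G : Type*) [CommRing R] [CommRing S] [Algebra R S]
    [Group G] (ρ : G →* (S ≃ₐ[R] S)) : TensorProduct R S S →ₐ[R] (G → S) :=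
  Pi.algHom _ _ fun g => Algebra.TensorProduct.productMap (AlgHom.id R S) (ρ g).toAlgHom

/-- `S/R` is a `G`-Galois extension. -/
structure IsGaloisExtension (R S G : Type*) [CommRing R] [CommRing S] [Algebra R S]
    [Group G] (ρ : G →* (S ≃ₐ[R] S)) : Prop where
  fixed : ∀ s : S, (∀ g : G, ρ g s = s) → ∃ r : R, algebraMap R S r = s
  bijective : Function.Bijective (galoisMap R S G ρ)


/-- The `G`-action on `T ⊗[R] S` induced by an action on the factor `S`. -/
noncomputable def baseChangeAction (R S G T : Type*) [CommRing R] [CommRing S]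
    [Algebra R S] [Group G] [CommRing T] [Algebra R T] (ρ : G →* (S ≃ₐ[R] S)) :
    G →* ((TensorProduct R T S) ≃ₐ[T] TensorProduct R T S) where
  toFun g := Algebra.TensorProduct.congr (AlgEquiv.refl (R := T) (A₁ := T)) (ρ g)
  map_one' := by
    apply AlgEquiv.ext
    intro x
    induction x with
    | zero => simp
    | tmul t s => simp [map_one]
    | add a b ha hb => simp_all [map_add]
  map_mul' g₁ g₂ := by
    apply AlgEquiv.ext
    intro x
    induction x with
    | zero => simp
    | tmul t s => simp [map_mul]
    | add a b ha hb => simp_all [map_add]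

lemma galoisMap_tmul {R S G : Type*} [CommRing R] [CommRing S] [Algebra R S]
    [Group G] (ρ : G →* (S ≃ₐ[R] S)) (a b : S) (g : G) :
    galoisMap R S G ρ (a ⊗ₜ[R] b) g = a * ρ g b := by
  simp [galoisMap]

section master
variable {T A G : Type*} [CommRing T] [CommRing A] [Algebra T A]
  [Group G] [Fintype G] [DecidableEq G] (ρ : G →* (A ≃ₐ[T] A))

lemma bijective_of_casimir {ι : Type*} (t : Finset ι) (x y : ι → A)
    (C1 : ∀ g : G, ∑ i ∈ t, x i * ρ g (y i) = if g = 1 then 1 else 0)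
    (C2 : ∀ a : A, ∑ i ∈ t, (a * x i) ⊗ₜ[T] (y i) = ∑ i ∈ t, (x i) ⊗ₜ[T] (a * y i))
    (C3 : ∀ i, ∃ r : T, algebraMap T A r = ∑ g : G, ρ g (y i)) :
    Function.Bijective (galoisMap T A G ρ) := by
  have hsum1 : ∑ g : G, (if g = 1 then (1:A) else 0) = 1 := by simp
  have hright : ∀ f : G → A,
      galoisMap T A G ρ (∑ g : G, ∑ i ∈ t, (f g * x i) ⊗ₜ[T] (ρ g⁻¹ (y i))) = f := by
    intro f
    funext g'
    simp only [map_sum, Finset.sum_apply, galoisMap_tmul]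
    have : ∀ g : G, ∑ i ∈ t, f g * x i * ρ g' (ρ g⁻¹ (y i))
        = if g = g' then f g else 0 := by
      intro g
      have : ∀ i, f g * x i * ρ g' (ρ g⁻¹ (y i)) = f g * (x i * ρ (g' * g⁻¹) (y i)) := by
        intro i
        rw [map_mul ρ, AlgEquiv.mul_apply, mul_assoc]
      rw [Finset.sum_congr rfl fun i _ => this i, ← Finset.mul_sum, C1]
      by_cases hg : g = g'
      · simp [hg]
      · have : ¬ (g' * g⁻¹ = 1) := by
          intro hc; exact hg (by rw [mul_inv_eq_one] at hc; exact hc.symm)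
        simp [hg, this]
    rw [Finset.sum_congr rfl fun g _ => this g]
    simp
  have hleft : ∀ z : TensorProduct T A A,
      (∑ g : G, ∑ i ∈ t, ((galoisMap T A G ρ z) g * x i) ⊗ₜ[T] (ρ g⁻¹ (y i))) = z := by
    intro z
    induction z with
    | zero => simp
    | add u v hu hv =>
      rw [map_add]
      simp only [Pi.add_apply, add_mul, TensorProduct.add_tmul, Finset.sum_add_distrib]
      rw [hu, hv]
    | tmul a b =>
      have key : ∀ g : G, ∑ i ∈ t, ((ρ g b) * x i) ⊗ₜ[T] (ρ g⁻¹ (y i))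
          = ∑ i ∈ t, (x i) ⊗ₜ[T] (b * ρ g⁻¹ (y i)) := by
        intro g
        have := congrArg (Algebra.TensorProduct.map (AlgHom.id T A) (ρ g⁻¹).toAlgHom)
          (C2 (ρ g b))
        simp only [map_sum, Algebra.TensorProduct.map_tmul, AlgHom.coe_id, id_eq,
          AlgEquiv.toAlgHom_eq_coe, AlgHom.coe_coe, map_mul] at this
        have hb : ρ g⁻¹ (ρ g b) = b := by
          rw [← AlgEquiv.mul_apply, ← map_mul, inv_mul_cancel, map_one, AlgEquiv.one_apply]
        simp only [AlgEquiv.toAlgHom_apply, hb] at this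
        exact this
      have step : ∀ g : G, ∑ i ∈ t, ((galoisMap T A G ρ (a ⊗ₜ[T] b)) g * x i) ⊗ₜ[T] (ρ g⁻¹ (y i))
          = (a ⊗ₜ[T] b) * ∑ i ∈ t, (x i) ⊗ₜ[T] (ρ g⁻¹ (y i)) := by
        intro g
        simp only [galoisMap_tmul]
        have : ∀ i ∈ t, (a * ρ g b * x i) ⊗ₜ[T] (ρ g⁻¹ (y i))
            = (a ⊗ₜ[T] (1:A)) * (((ρ g b) * x i) ⊗ₜ[T] (ρ g⁻¹ (y i))) := by
          intro i _
          rw [Algebra.TensorProduct.tmul_mul_tmul, one_mul, mul_assoc]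
        rw [Finset.sum_congr rfl this, ← Finset.mul_sum, key, Finset.mul_sum, Finset.mul_sum]
        refine Finset.sum_congr rfl fun i _ => ?_
        rw [Algebra.TensorProduct.tmul_mul_tmul, Algebra.TensorProduct.tmul_mul_tmul, one_mul]
      rw [Finset.sum_congr rfl fun g _ => step g, ← Finset.mul_sum]
      rw [Finset.sum_comm]
      have : ∀ i ∈ t, ∑ g : G, (x i) ⊗ₜ[T] (ρ g⁻¹ (y i)) = (x i) ⊗ₜ[T] (∑ g : G, ρ g (y i)) := by
        intro i _
        rw [TensorProduct.tmul_sum]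
        exact Fintype.sum_equiv (Equiv.inv G) _ _ fun g => by simp
      rw [Finset.sum_congr rfl this]
      have : ∀ i ∈ t, (x i) ⊗ₜ[T] (∑ g : G, ρ g (y i))
          = (x i * ∑ g : G, ρ g (y i)) ⊗ₜ[T] (1:A) := by
        intro i _
        obtain ⟨r, hr⟩ := C3 i
        rw [← hr, mul_comm (x i), ← Algebra.smul_def, TensorProduct.smul_tmul,
          ← Algebra.algebraMap_eq_smul_one]
      rw [Finset.sum_congr rfl this, ← TensorProduct.sum_tmul]
      have : ∑ i ∈ t, x i * ∑ g : G, ρ g (y i) = 1 := by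
        rw [Finset.sum_congr rfl fun i (_ : i ∈ t) => Finset.mul_sum ..]
        rw [Finset.sum_comm, Finset.sum_congr rfl fun g (_ : g ∈ Finset.univ) => C1 g, hsum1]
      rw [this, Algebra.TensorProduct.tmul_mul_tmul, mul_one, mul_one]
  constructor
  · intro z₁ z₂ e
    rw [← hleft z₁, ← hleft z₂, e]
  · intro f
    exact ⟨_, hright f⟩

end master

/-- base change of a `G`-Galois extension along `R → T` is `G`-Galois. -/
theorem galois_base_change (R S G T : Type*) [CommRing R] [CommRing S] [Algebra R S]
    [Group G] [Finite G] [CommRing T] [Algebra R T] (ρ : G →* (S ≃ₐ[R] S))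
    (hGal : IsGaloisExtension R S G ρ) :
    IsGaloisExtension T (TensorProduct R T S) G (baseChangeAction R S G T ρ) := by
  classical
  have : Fintype G := Fintype.ofFinite G
  set ρ' := baseChangeAction R S G T ρ with hρ'
  have ρ'_tmul : ∀ (g : G) (p : T) (s : S), ρ' g (p ⊗ₜ[R] s) = p ⊗ₜ[R] (ρ g s) := by
    intro g p s
    simp [hρ', baseChangeAction]
  -- trace lands in R
  have trace_in_R : ∀ s : S, ∃ r : R, algebraMap R S r = ∑ g : G, ρ g s := by
    intro s
    apply hGal.fixed
    intro g₀
    rw [map_sum]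
    exact Fintype.sum_equiv (Equiv.mulLeft g₀) _ _ fun g => by
      rw [← AlgEquiv.mul_apply, ← map_mul]; rfl
  -- Casimir element
  obtain ⟨u, hu⟩ := hGal.bijective.2 (fun g => if g = 1 then (1:S) else 0)
  obtain ⟨t, ht⟩ := TensorProduct.exists_finset u
  have C1S : ∀ g : G, ∑ i ∈ t, i.1 * ρ g i.2 = if g = 1 then 1 else 0 := by
    intro g
    have h2 := congrFun hu g
    rw [ht] at h2
    simpa [map_sum, Finset.sum_apply, galoisMap_tmul] using h2
  have key_id : ∀ s : S, ∑ i ∈ t, i.1 * ∑ g : G, ρ g (i.2 * s) = s := by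
    intro s
    have h1 : ∀ i ∈ t, i.1 * ∑ g : G, ρ g (i.2 * s) = ∑ g : G, (i.1 * ρ g i.2) * ρ g s := by
      intro i _
      rw [Finset.mul_sum]
      exact Finset.sum_congr rfl fun g _ => by rw [map_mul, mul_assoc]
    rw [Finset.sum_congr rfl h1, Finset.sum_comm]
    have h2 : ∀ g : G, ∑ i ∈ t, (i.1 * ρ g i.2) * ρ g s
        = (if g = 1 then 1 else 0) * ρ g s := by
      intro g; rw [← Finset.sum_mul, C1S]
    rw [Finset.sum_congr rfl fun g _ => h2 g]
    simp [ite_mul]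
  -- trace surjectivity via Nakayama
  set I : Ideal R :=
    { carrier := {r | ∃ s : S, algebraMap R S r = ∑ g : G, ρ g s}
      add_mem' := by
        rintro a b ⟨s₁, h₁⟩ ⟨s₂, h₂⟩
        exact ⟨s₁ + s₂, by simp [map_add, h₁, h₂, Finset.sum_add_distrib]⟩
      zero_mem' := ⟨0, by simp⟩
      smul_mem' := by
        rintro cc r ⟨s, hs⟩
        refine ⟨algebraMap R S cc * s, ?_⟩
        rw [smul_eq_mul, map_mul, hs, Finset.mul_sum]
        exact Finset.sum_congr rfl fun g _ => by rw [map_mul, AlgEquiv.commutes] } with hI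
  have fg : (⊤ : Submodule R S).FG := by
    refine ⟨t.image Prod.fst, ?_⟩
    rw [eq_top_iff]
    intro s _
    rw [← key_id s]
    refine Submodule.sum_mem _ fun i hi => ?_
    obtain ⟨r, hr⟩ := trace_in_R (i.2 * s)
    rw [← hr, mul_comm, ← Algebra.smul_def]
    exact Submodule.smul_mem _ _
      (Submodule.subset_span (Finset.mem_coe.2 (Finset.mem_image_of_mem _ hi)))
  have hle : (⊤ : Submodule R S) ≤ I • (⊤ : Submodule R S) := by
    intro s _
    rw [← key_id s]
    refine Submodule.sum_mem _ fun i _ => ?_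
    obtain ⟨r, hr⟩ := trace_in_R (i.2 * s)
    rw [← hr, mul_comm, ← Algebra.smul_def]
    exact Submodule.smul_mem_smul ⟨i.2 * s, hr⟩ Submodule.mem_top
  obtain ⟨r, hr1, hr0⟩ :=
    Submodule.exists_sub_one_mem_and_smul_eq_zero_of_fg_of_le_smul I ⊤ fg hle
  have hralg : algebraMap R S r = 0 := by
    rw [Algebra.algebraMap_eq_smul_one]
    exact hr0 1 Submodule.mem_top
  have h1I : (1 : R) ∈ I := by
    have hrI : r ∈ I := ⟨0, by simpa using hralg⟩
    have := I.sub_mem hrI hr1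
    simpa using this
  obtain ⟨c, hc⟩ := h1I
  have htrc : ∑ g : G, ρ g c = 1 := by rw [← hc, map_one]
  -- A-side Casimir data
  set X : S × S → TensorProduct R T S := fun i => (1:T) ⊗ₜ[R] i.1 with hX
  set Y : S × S → TensorProduct R T S := fun i => (1:T) ⊗ₜ[R] i.2 with hY
  have C1A : ∀ g : G, ∑ i ∈ t, X i * ρ' g (Y i)
      = if g = 1 then (1 : TensorProduct R T S) else 0 := by
    intro g
    simp only [hX, hY, ρ'_tmul, Algebra.TensorProduct.tmul_mul_tmul, one_mul]
    rw [← TensorProduct.tmul_sum, C1S g]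
    split_ifs
    · exact (Algebra.TensorProduct.one_def).symm
    · exact TensorProduct.tmul_zero _ _
  have C2S : ∀ s : S, ∑ i ∈ t, (s * i.1) ⊗ₜ[R] i.2 = ∑ i ∈ t, i.1 ⊗ₜ[R] (s * i.2) := by
    intro s
    apply hGal.bijective.1
    funext g
    simp only [map_sum, Finset.sum_apply, galoisMap_tmul]
    have hl : ∑ i ∈ t, s * i.1 * ρ g i.2 = s * ∑ i ∈ t, i.1 * ρ g i.2 := by
      rw [Finset.mul_sum]
      exact Finset.sum_congr rfl fun i _ => by rw [mul_assoc]
    have hrr : ∑ i ∈ t, i.1 * ρ g (s * i.2) = ρ g s * ∑ i ∈ t, i.1 * ρ g i.2 := by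
      rw [Finset.mul_sum]
      exact Finset.sum_congr rfl fun i _ => by rw [map_mul, mul_left_comm]
    rw [hl, hrr, C1S]
    by_cases hg : g = 1
    · simp [hg]
    · simp [hg]
  -- the map Φ : S ⊗[R] S → (T⊗S) ⊗[T] (T⊗S)
  set f1 : S →ₐ[R] TensorProduct T (TensorProduct R T S) (TensorProduct R T S) :=
    ((Algebra.TensorProduct.includeLeft
        (R := T) (S := T) (A := TensorProduct R T S) (B := TensorProduct R T S)).restrictScalars
        R).comp (Algebra.TensorProduct.includeRight (R := R) (A := T) (B := S)) with hf1
  set f2 : S →ₐ[R] TensorProduct T (TensorProduct R T S) (TensorProduct R T S) :=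
    ((Algebra.TensorProduct.includeRight
        (R := T) (A := TensorProduct R T S) (B := TensorProduct R T S)).restrictScalars
        R).comp (Algebra.TensorProduct.includeRight (R := R) (A := T) (B := S)) with hf2
  set Φ := Algebra.TensorProduct.lift f1 f2 (fun _ _ => Commute.all _ _) with hΦ
  have Φtmul : ∀ a b : S, Φ (a ⊗ₜ[R] b)
      = ((1:T) ⊗ₜ[R] a) ⊗ₜ[T] ((1:T) ⊗ₜ[R] b) := by
    intro a b
    rw [hΦ, Algebra.TensorProduct.lift_tmul]
    simp [hf1, hf2, Algebra.TensorProduct.tmul_mul_tmul]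
  have C2A : ∀ a : TensorProduct R T S,
      ∑ i ∈ t, (a * X i) ⊗ₜ[T] (Y i) = ∑ i ∈ t, (X i) ⊗ₜ[T] (a * Y i) := by
    intro a
    induction a with
    | zero => simp
    | add u v hu hv =>
      simp only [add_mul, TensorProduct.add_tmul, TensorProduct.tmul_add,
        Finset.sum_add_distrib, hu, hv]
    | tmul p s =>
      have base := congrArg Φ (C2S s)
      simp only [map_sum, Φtmul] at base
      have hsm : ∀ w : S, (p ⊗ₜ[R] w : TensorProduct R T S) = p • ((1:T) ⊗ₜ[R] w) := by
        intro w; rw [TensorProduct.smul_tmul', smul_eq_mul, mul_one]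
      simp only [hX, hY, Algebra.TensorProduct.tmul_mul_tmul, mul_one, one_mul]
      simp only [hsm]
      simp only [← TensorProduct.smul_tmul', TensorProduct.tmul_smul]
      rw [← Finset.smul_sum, ← Finset.smul_sum, base]
  have C3A : ∀ i : S × S, ∃ p : T,
      algebraMap T (TensorProduct R T S) p = ∑ g : G, ρ' g (Y i) := by
    intro i
    obtain ⟨r, hr⟩ := trace_in_R i.2
    refine ⟨algebraMap R T r, ?_⟩
    simp only [hY, ρ'_tmul]
    rw [← TensorProduct.tmul_sum, ← hr]
    simp only [Algebra.TensorProduct.algebraMap_apply, Algebra.algebraMap_self, RingHom.id_apply]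
    rw [Algebra.algebraMap_eq_smul_one (R := R) (A := T),
      Algebra.algebraMap_eq_smul_one (R := R) (A := S), TensorProduct.smul_tmul]
  refine ⟨?_, bijective_of_casimir ρ' t X Y C1A C2A C3A⟩
  intro a ha
  have key : ∀ w : TensorProduct R T S, ∃ p : T,
      algebraMap T (TensorProduct R T S) p = ∑ g : G, ρ' g (((1:T) ⊗ₜ[R] c) * w) := by
    intro w
    induction w with
    | zero => exact ⟨0, by simp⟩
    | tmul q s =>
      obtain ⟨r, hr⟩ := trace_in_R (c * s)
      refine ⟨algebraMap R T r * q, ?_⟩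
      have h3 : ∀ g : G, ρ' g (((1:T) ⊗ₜ[R] c) * (q ⊗ₜ[R] s)) = q ⊗ₜ[R] (ρ g (c * s)) := by
        intro g; rw [Algebra.TensorProduct.tmul_mul_tmul, one_mul, ρ'_tmul]
      rw [Finset.sum_congr rfl fun g _ => h3 g, ← TensorProduct.tmul_sum, ← hr]
      simp only [Algebra.TensorProduct.algebraMap_apply, Algebra.algebraMap_self, RingHom.id_apply]
      rw [← Algebra.smul_def, TensorProduct.smul_tmul, Algebra.algebraMap_eq_smul_one]
    | add u v hu hv =>
      obtain ⟨p₁, h₁⟩ := hu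
      obtain ⟨p₂, h₂⟩ := hv
      refine ⟨p₁ + p₂, ?_⟩
      rw [map_add, h₁, h₂, mul_add]
      simp only [map_add, Finset.sum_add_distrib]
  obtain ⟨p, hp⟩ := key a
  refine ⟨p, ?_⟩
  rw [hp]
  have h4 : ∀ g : G, ρ' g (((1:T) ⊗ₜ[R] c) * a) = ρ' g ((1:T) ⊗ₜ[R] c) * a := by
    intro g; rw [map_mul, ha g]
  rw [Finset.sum_congr rfl fun g _ => h4 g, ← Finset.sum_mul]
  have h5 : ∑ g : G, ρ' g ((1:T) ⊗ₜ[R] c) = 1 := by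
    simp only [ρ'_tmul]
    rw [← TensorProduct.tmul_sum, htrc]
    exact (Algebra.TensorProduct.one_def).symm
  rw [h5, one_mul]
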